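/- Let B and B' be bases of a matroid. Then there is a bijection ψ: B → B' such that for each x ∈ B, the set (B' \ {ψ(x)}) ∪ {x} is independent. -/

import Mathlib

open Set

/-- Key lemma: every `x ∈ B` lies in the closure of its "exchange neighborhood" in `B'`. -/
lemma stmt3_key {α : Type*} (M : Matroid α) [M.Finite] (B B' : Set α)
    (hB : M.IsBase B) (hB' : M.IsBase B') (x : α) (hx : x ∈ B) :
    x ∈ M.closure {y ∈ B' | M.Indep (insert x (B' \ {y}))} := by
  have hxE : x ∈ M.E := hB.subset_ground hx
  have hB'i := hB'.indep
  -- choose a minimal `J ⊆ B'` with `x ∈ closure J`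
  have hfam : {J : Set α | J ⊆ B' ∧ x ∈ M.closure J}.Finite := by
    refine Finite.subset (M.set_finite B' hB'.subset_ground).finite_subsets ?_
    exact fun J hJ => hJ.1
  have hne : {J : Set α | J ⊆ B' ∧ x ∈ M.closure J}.Nonempty :=
    ⟨B', subset_rfl, by rw [hB'.closure_eq]; exact hxE⟩
  obtain ⟨J, ⟨hJB', hxJ⟩, hmin⟩ : ∃ J ∈ {J : Set α | J ⊆ B' ∧ x ∈ M.closure J}, ∀ J' ∈ {J : Set α | J ⊆ B' ∧ x ∈ M.closure J}, id J' ≤ id J → id J = id J' := by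
    obtain ⟨J, hJ, hm⟩ := Set.Finite.exists_minimalFor id _ hfam hne
    exact ⟨J, hJ, fun J' hJ' h => (hm hJ' h).antisymm h⟩
  simp only [id] at hmin
  have hminJ : ∀ y ∈ J, x ∉ M.closure (J \ {y}) := by
    intro y hy hcon
    have := hmin (J \ {y}) ⟨(diff_subset).trans hJB', hcon⟩ diff_subset
    exact (this ▸ hy : y ∈ J \ {y}).2 rfl
  -- `J` is contained in the neighborhood
  have hJN : J ⊆ {y ∈ B' | M.Indep (insert x (B' \ {y}))} := by
    intro y hyJ
    refine ⟨hJB' hyJ, ?_⟩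
    have hIy : M.Indep (B' \ {y}) := hB'i.subset diff_subset
    by_cases hxB' : x ∈ B' \ {y}
    · rw [insert_eq_of_mem hxB']; exact hIy
    rw [hIy.insert_indep_iff]
    left
    refine ⟨hxE, fun hcl => ?_⟩
    by_cases hxy : x = y
    · subst hxy
      exact hB'i.notMem_closure_diff_of_mem (hJB' hyJ) hcl
    -- closure exchange
    have h1 : x ∈ M.closure (insert y (J \ {y})) := by
      rwa [insert_diff_singleton, insert_eq_of_mem hyJ]
    have h2 : x ∉ M.closure (J \ {y}) := hminJ y hyJ
    have hy2 : y ∈ M.closure (insert x (J \ {y})) :=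
      (Matroid.closure_exchange ⟨h1, h2⟩).1
    have hsub : insert x (J \ {y}) ⊆ insert x (B' \ {y}) :=
      insert_subset_insert (diff_subset_diff_left hJB')
    have hy3 : y ∈ M.closure (insert x (B' \ {y})) :=
      M.closure_subset_closure hsub hy2
    rw [Matroid.closure_insert_eq_of_mem_closure hcl] at hy3
    exact hB'i.notMem_closure_diff_of_mem (hJB' hyJ) hy3
  exact M.closure_subset_closure hJN hxJ

/-- Cardinality lemma: an independent set inside the closure of an independent set is no bigger. -/
lemma stmt3_card {α : Type*} (M : Matroid α) {S T : Set α}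
    (hS : M.Indep S) (hT : M.Indep T) (hST : S ⊆ M.closure T) :
    S.encard ≤ T.encard := by
  have hTb : (M.restrict (M.closure T)).IsBase T := hT.isBasis_closure.isBase_restrict
  have hS' : (M.restrict (M.closure T)).Indep S := Matroid.restrict_indep_iff.mpr ⟨hS, hST⟩
  obtain ⟨B₀, hB₀, hSB₀⟩ := hS'.exists_isBase_superset
  calc S.encard ≤ B₀.encard := encard_mono hSB₀
    _ = T.encard := hB₀.encard_eq_encard_of_isBase hTb

/-- Brualdi. For bases `B` and `B'` of a matroid there is a bijection
`ψ : B → B'` such that `(B' \ {ψ x}) ∪ {x}` is independent for every `x ∈ B`. -/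
theorem stmt3 {α : Type*} (M : Matroid α) [M.Finite] (B B' : Set α)
    (hB : M.IsBase B) (hB' : M.IsBase B') :
    ∃ ψ : α → α, Set.BijOn ψ B B' ∧
      ∀ x ∈ B, M.Indep (insert x (B' \ {ψ x})) := by
  classical
  have hB'fin : B'.Finite := M.set_finite B' hB'.subset_ground
  set N : α → Set α := fun x => {y ∈ B' | M.Indep (insert x (B' \ {y}))} with hNdef
  have hNfin : ∀ x, (N x).Finite := fun x => hB'fin.subset (fun y hy => hy.1)
  -- Hall's condition
  have hall : ∀ s : Finset ↥B, s.card ≤ (s.biUnion fun x => (hNfin x.1).toFinset).card := by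
    intro s
    set T : Set α := ↑(s.biUnion fun x => (hNfin x.1).toFinset) with hTdef
    set S : Set α := Subtype.val '' (↑s : Set ↥B) with hSdef
    have hSB : S ⊆ B := by rintro _ ⟨a, _, rfl⟩; exact a.2
    have hSi : M.Indep S := hB.indep.subset hSB
    have hTB' : T ⊆ B' := by
      intro y hy
      simp only [hTdef, Finset.coe_biUnion, mem_iUnion, Finset.mem_coe,
        Set.Finite.mem_toFinset] at hy
      obtain ⟨a, _, ha⟩ := hy
      exact ha.1
    have hTi : M.Indep T := hB'.indep.subset hTB'
    have hScl : S ⊆ M.closure T := by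
      rintro _ ⟨a, has, rfl⟩
      have h1 : a.1 ∈ M.closure (N a.1) := stmt3_key M B B' hB hB' a.1 a.2
      refine M.closure_subset_closure ?_ h1
      intro y hy
      simp only [hTdef, Finset.coe_biUnion, mem_iUnion, Finset.mem_coe,
        Set.Finite.mem_toFinset]
      exact ⟨a, has, hy⟩
    have hcard := stmt3_card M hSi hTi hScl
    have hSenc : S.encard = s.card := by
      rw [hSdef, Subtype.val_injective.injOn.encard_image,
        encard_coe_eq_coe_finsetCard]
    have hTenc : T.encard = (s.biUnion fun x => (hNfin x.1).toFinset).card :=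
      encard_coe_eq_coe_finsetCard _
    rw [hSenc, hTenc] at hcard
    exact_mod_cast hcard
  obtain ⟨f, hfinj, hfmem⟩ :=
    (Finset.all_card_le_biUnion_card_iff_exists_injective
      (fun x : ↥B => (hNfin x.1).toFinset)).mp hall
  have hfN : ∀ x : ↥B, f x ∈ N x.1 := fun x => (Set.Finite.mem_toFinset _).mp (hfmem x)
  refine ⟨fun a => if h : a ∈ B then f ⟨a, h⟩ else a, ?_, ?_⟩
  · have hmaps : MapsTo (fun a => if h : a ∈ B then f ⟨a, h⟩ else a) B B' := by
      intro a ha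
      simp only [dif_pos ha]
      exact (hfN ⟨a, ha⟩).1
    have hinj : InjOn (fun a => if h : a ∈ B then f ⟨a, h⟩ else a) B := by
      intro a ha b hb hab
      simp only [dif_pos ha, dif_pos hb] at hab
      exact congrArg Subtype.val (hfinj hab)
    refine ⟨hmaps, hinj, ?_⟩
    have himg : (fun a => if h : a ∈ B then f ⟨a, h⟩ else a) '' B = B' := by
      refine hB'fin.eq_of_subset_of_encard_le' (hmaps.image_subset) ?_
      rw [hinj.encard_image, hB'.encard_eq_encard_of_isBase hB]
    rw [SurjOn, himg]
  · intro x hx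
    simp only [dif_pos hx]
    exact (hfN ⟨x, hx⟩).2
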